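/- For n > 1, the Tutte polynomial of the Catalan matroid M_n is t(M_n; x, y) = Σ_{i,j>0} ((i+j−2)/(n−1)) * binomial(2n−i−j−1, n−i−j+1) * x^i y^j. In particular, the coefficient of x^i y^j depends only on n and on the sum i + j, and t(M_n; x, y) is symmetric in x and y. -/

import Mathlib

attribute [local instance] Classical.propDecidable

/-- `B` is a transversal of the interval system `(N_j = [lo j, hi j])_{j : Fin r}`;
for the Catalan matroid `M_n` (intervals `N_j = [2j, n + j]`) these are exactly
the bases. -/
def IsTransLH (r : ℕ) (lo hi : Fin r → ℕ) (B : Finset ℕ) : Prop :=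
  ∃ f : Fin r ↪ ℕ, (∀ j : Fin r, lo j ≤ f j ∧ f j ≤ hi j) ∧ Finset.univ.map f = B

/-- Internal activity of a basis `B` (natural order on the ground set `[1, N]`). -/
noncomputable def intAct (N r : ℕ) (lo hi : Fin r → ℕ) (B : Finset ℕ) : ℕ :=
  (B.filter (fun b => ¬ ∃ y ∈ Finset.Icc 1 N \ B, y < b ∧
    IsTransLH r lo hi (insert y (B.erase b)))).card

/-- External activity of a basis `B` (natural order on the ground set `[1, N]`). -/
noncomputable def extAct (N r : ℕ) (lo hi : Fin r → ℕ) (B : Finset ℕ) : ℕ :=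
  ((Finset.Icc 1 N \ B).filter (fun e => ¬ ∃ y ∈ B, y < e ∧
    IsTransLH r lo hi (insert e (B.erase y)))).card

/-- The Tutte polynomial `t(M_n; x, y) = Σ_B x^{i(B)} y^{e(B)}` of the Catalan
matroid `M_n`, as a polynomial in `X 0 = x` and `X 1 = y`. -/
noncomputable def tutteCatalan (n : ℕ) : MvPolynomial (Fin 2) ℚ :=
  ∑ B ∈ (Finset.Icc 1 (2 * n)).powerset.filter
      (IsTransLH n (fun j => 2 * ((j : ℕ) + 1)) (fun j => n + (j : ℕ) + 1)),
    MvPolynomial.X 0 ^ intAct (2 * n) n (fun j => 2 * ((j : ℕ) + 1))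
        (fun j => n + (j : ℕ) + 1) B *
      MvPolynomial.X 1 ^ extAct (2 * n) n (fun j => 2 * ((j : ℕ) + 1))
        (fun j => n + (j : ℕ) + 1) B

namespace StmtAux

open Finset

/-- number of elements of `B` that are `≤ m`. -/
def cnt (B : Finset ℕ) (m : ℕ) : ℕ := (B.filter (fun x => x ≤ m)).card

def IsBasis (n : ℕ) (B : Finset ℕ) : Prop :=
  B.card = n ∧ (∀ m, 2 * cnt B m ≤ m) ∧ ∀ m ≤ 2 * n, m ≤ n + cnt B m

lemma cnt_mono (B : Finset ℕ) {m m' : ℕ} (h : m ≤ m') : cnt B m ≤ cnt B m' :=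
  card_le_card (fun x hx => by
    rcases mem_filter.1 hx with ⟨h1, h2⟩
    exact mem_filter.2 ⟨h1, le_trans h2 h⟩)

lemma cnt_le_card (B : Finset ℕ) (m : ℕ) : cnt B m ≤ B.card :=
  card_le_card (filter_subset _ _)

lemma one_le_cnt {B : Finset ℕ} {b m : ℕ} (hb : b ∈ B) (h : b ≤ m) : 1 ≤ cnt B m :=
  card_pos.2 ⟨b, mem_filter.2 ⟨hb, h⟩⟩

lemma cnt_insert {B : Finset ℕ} {y : ℕ} (h : y ∉ B) (m : ℕ) :
    cnt (insert y B) m = cnt B m + if y ≤ m then 1 else 0 := by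
  unfold cnt
  rw [filter_insert]
  split
  · rw [card_insert_of_notMem (fun hc => h (mem_filter.1 hc).1)]
  · rfl

lemma cnt_erase {B : Finset ℕ} {b : ℕ} (h : b ∈ B) (m : ℕ) :
    cnt (B.erase b) m + (if b ≤ m then 1 else 0) = cnt B m := by
  unfold cnt
  rw [filter_erase]
  split_ifs with hbm
  · have hmem : b ∈ B.filter (fun x => x ≤ m) := mem_filter.2 ⟨h, hbm⟩
    rw [card_erase_of_mem hmem]
    have h1 : 1 ≤ (B.filter (fun x => x ≤ m)).card := card_pos.2 ⟨b, hmem⟩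
    omega
  · have hnm : b ∉ B.filter (fun x => x ≤ m) := fun hc => hbm (mem_filter.1 hc).2
    rw [Finset.erase_eq_of_notMem hnm, Nat.add_zero]

lemma cnt_swap {B : Finset ℕ} {y b : ℕ} (hy : y ∉ B) (hb : b ∈ B) (m : ℕ) :
    cnt (insert y (B.erase b)) m + (if b ≤ m then 1 else 0)
      = cnt B m + (if y ≤ m then 1 else 0) := by
  rw [cnt_insert (fun hc => hy (mem_of_mem_erase hc)) m]
  have := cnt_erase hb m
  omega

lemma card_filter_coe_lt_le (r t : ℕ) :
    ((univ : Finset (Fin r)).filter fun j : Fin r => (j : ℕ) < t).card ≤ t := by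
  calc ((univ : Finset (Fin r)).filter fun j : Fin r => (j : ℕ) < t).card
      ≤ (Finset.range t).card := card_le_card_of_injOn (fun j : Fin r => (j : ℕ))
        (fun a ha => mem_range.2 (mem_filter.1 ha).2)
        (fun a _ b _ hab => Fin.val_injective hab)
    _ = t := card_range t

lemma le_card_filter_coe_lt {r t : ℕ} (ht : t ≤ r) :
    t ≤ ((univ : Finset (Fin r)).filter fun j : Fin r => (j : ℕ) < t).card := by
  rcases Nat.eq_zero_or_pos t with rfl | htpos
  · exact Nat.zero_le _
  have hr : 0 < r := lt_of_lt_of_le htpos ht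
  calc t = (Finset.range t).card := (card_range t).symm
    _ ≤ _ := card_le_card_of_injOn (fun v => (⟨v % r, Nat.mod_lt v hr⟩ : Fin r))
        (fun a ha => by
          have ha' : a < t := mem_range.1 ha
          have har : a < r := lt_of_lt_of_le ha' ht
          refine mem_filter.2 ⟨mem_univ _, ?_⟩
          show a % r < t
          rwa [Nat.mod_eq_of_lt har])
        (fun a ha b hb hab => by
          have har : a < r := lt_of_lt_of_le (mem_range.1 ha) ht
          have hbr : b < r := lt_of_lt_of_le (mem_range.1 hb) ht
          have := congrArg Fin.val hab
          simpa [Nat.mod_eq_of_lt har, Nat.mod_eq_of_lt hbr] using this)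

/-- For any `B`, being a transversal of the Catalan interval system is
equivalent to the counting conditions. -/
lemma isTrans_iff {n : ℕ} (B : Finset ℕ) :
    IsTransLH n (fun j => 2 * ((j : ℕ) + 1)) (fun j => n + (j : ℕ) + 1) B ↔
      IsBasis n B := by
  constructor
  · rintro ⟨f, hf, rfl⟩
    have hcnt : ∀ m, cnt (univ.map f) m = (univ.filter fun j => f j ≤ m).card := by
      intro m
      unfold cnt
      rw [filter_map, card_map]
      rfl
    refine ⟨by simp, fun m => ?_, fun m hm => ?_⟩
    · rw [hcnt]
      have h1 : (univ.filter fun j => f j ≤ m) ⊆ univ.filter fun j : Fin n => (j : ℕ) < m / 2 := by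
        intro j hj
        have hj' := (mem_filter.1 hj).2
        have h2 : 2 * ((j : ℕ) + 1) ≤ m := le_trans (hf j).1 hj'
        have h2' : 2 * ((j : ℕ) + 1) ≤ m := h2
        have : (j : ℕ) + 1 ≤ m / 2 := Nat.le_div_iff_mul_le (by norm_num) |>.2 (by omega)
        simp only [mem_filter, mem_univ, true_and]
        omega
      have h3 := card_le_card h1
      have h4 := card_filter_coe_lt_le n (m / 2)
      have h5 : 2 * (m / 2) ≤ m := by omega
      omega
    · rw [hcnt]
      rcases le_or_gt m n with h | h
      · omega
      · have h1 : (univ.filter fun j : Fin n => (j : ℕ) < m - n) ⊆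
            univ.filter fun j => f j ≤ m := by
          intro j hj
          have hj' : (j : ℕ) < m - n := (mem_filter.1 hj).2
          have h2 : f j ≤ n + (j : ℕ) + 1 := (hf j).2
          simp only [mem_filter, mem_univ, true_and]
          omega
        have h2 := card_le_card h1
        have h3 := le_card_filter_coe_lt (r := n) (t := m - n) (by omega)
        omega
  · rintro ⟨hcard, hlow, hup⟩
    set b := B.orderEmbOfFin hcard with hb
    have hmem : ∀ k, b k ∈ B := fun k => B.orderEmbOfFin_mem hcard k
    have hBle : B ⊆ Icc 1 (2 * n) := by
      intro x hx
      have hx1 : 1 ≤ cnt B x := one_le_cnt hx le_rfl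
      have hx2 := hlow x
      rcases le_or_gt x (2 * n) with h | h
      · exact mem_Icc.2 ⟨by omega, h⟩
      · exfalso
        have hsub : B.filter (· ≤ 2 * n) ⊆ B.erase x := by
          intro z hz
          rcases mem_filter.1 hz with ⟨hz1, hz2⟩
          exact mem_erase.2 ⟨by omega, hz1⟩
        have h1 : cnt B (2 * n) ≤ n - 1 := by
          have := card_le_card hsub
          rw [card_erase_of_mem hx, hcard] at this
          exact this
        have h2 := hup (2 * n) le_rfl
        have h3 : 1 ≤ n := by
          rw [← hcard]; exact card_pos.2 ⟨x, hx⟩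
        omega
    have hcntb : ∀ k : Fin n, cnt B (b k) = (k : ℕ) + 1 := by
      intro k
      have : B.filter (· ≤ b k) = (Iic k).image b := by
        ext x
        simp only [mem_filter, mem_image, mem_Iic]
        constructor
        · rintro ⟨hx1, hx2⟩
          have : x ∈ Set.range b := by rw [B.range_orderEmbOfFin hcard]; exact hx1
          rcases this with ⟨j, rfl⟩
          exact ⟨j, b.le_iff_le.1 hx2, rfl⟩
        · rintro ⟨j, hj, rfl⟩
          exact ⟨hmem j, b.le_iff_le.2 hj⟩
      rw [cnt, this, card_image_of_injective _ b.injective, Fin.card_Iic]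
    refine ⟨b.toEmbedding, fun k => ⟨?_, ?_⟩, ?_⟩
    · have := hlow (b k)
      rw [hcntb k] at this
      simpa using this
    · have h2n : b k ≤ 2 * n := (mem_Icc.1 (hBle (hmem k))).2
      have := hup (b k) h2n
      rw [hcntb k] at this
      simpa using by omega
    · ext x
      simp only [mem_map, mem_univ, true_and]
      constructor
      · rintro ⟨j, rfl⟩; exact hmem j
      · intro hx
        have : x ∈ Set.range b := by rw [B.range_orderEmbOfFin hcard]; exact hx
        rcases this with ⟨j, hj⟩; exact ⟨j, hj⟩


/-- the minimum of `B` (junk value for `∅`). -/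
noncomputable def mn (B : Finset ℕ) : ℕ := sInf {x : ℕ | x ∈ B}

/-- internal activity, counting characterization: number of `b ∈ B` with
`2 * cnt B b = b` ("returns to the diagonal"). -/
noncomputable def intA (B : Finset ℕ) : ℕ := (B.filter (fun b => 2 * cnt B b = b)).card

lemma mn_mem {B : Finset ℕ} (h : B.Nonempty) : mn B ∈ B := by
  have : {x : ℕ | x ∈ B}.Nonempty := ⟨h.choose, h.choose_spec⟩
  exact Nat.sInf_mem this

lemma mn_le {B : Finset ℕ} {x : ℕ} (h : x ∈ B) : mn B ≤ x := Nat.sInf_le h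

lemma cnt_succ (B : Finset ℕ) (m : ℕ) :
    cnt B (m + 1) = cnt B m + (if m + 1 ∈ B then 1 else 0) := by
  unfold cnt
  split_ifs with h
  · have : B.filter (fun x => x ≤ m + 1) = insert (m + 1) (B.filter (fun x => x ≤ m)) := by
      ext x
      simp only [mem_filter, mem_insert]
      constructor
      · rintro ⟨hx1, hx2⟩
        rcases Nat.lt_or_ge x (m + 1) with h' | h'
        · exact Or.inr ⟨hx1, by omega⟩
        · exact Or.inl (by omega)
      · rintro (rfl | ⟨hx1, hx2⟩)
        · exact ⟨h, le_rfl⟩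
        · exact ⟨hx1, by omega⟩
    rw [this, card_insert_of_notMem (fun hc => by
      have := (mem_filter.1 hc).2; omega)]
  · congr 1
    ext x
    simp only [mem_filter]
    constructor
    · rintro ⟨hx1, hx2⟩
      refine ⟨hx1, ?_⟩
      rcases Nat.lt_or_ge x (m + 1) with h' | h'
      · omega
      · exfalso; have : x = m + 1 := by omega
        exact h (this ▸ hx1)
    · rintro ⟨hx1, hx2⟩; exact ⟨hx1, by omega⟩

lemma cnt_mem_succ {B : Finset ℕ} {b : ℕ} (hb : b ∈ B) (h1 : 1 ≤ b) :
    cnt B b = cnt B (b - 1) + 1 := by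
  have := cnt_succ B (b - 1)
  have hb' : b - 1 + 1 = b := by omega
  rw [hb'] at this
  rw [this, if_pos hb]

section basisfacts

variable {n : ℕ} {B : Finset ℕ} (hB : IsBasis n B) (hn : 1 ≤ n)
include hB

lemma basis_nonempty (hn : 1 ≤ n) : B.Nonempty := by
  rw [← card_pos, hB.1]; omega

lemma basis_subset : B ⊆ Icc 1 (2 * n) := by
  intro x hx
  have hx1 : 1 ≤ cnt B x := one_le_cnt hx le_rfl
  have hx2 := hB.2.1 x
  rcases le_or_gt x (2 * n) with h | h
  · exact mem_Icc.2 ⟨by omega, h⟩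
  · exfalso
    have hsub : B.filter (fun z => z ≤ 2 * n) ⊆ B.erase x := by
      intro z hz
      rcases mem_filter.1 hz with ⟨hz1, hz2⟩
      exact mem_erase.2 ⟨by omega, hz1⟩
    have h1 : cnt B (2 * n) ≤ n - 1 := by
      have h2 := card_le_card hsub
      rw [card_erase_of_mem hx, hB.1] at h2
      exact h2
    have h2 := hB.2.2 (2 * n) le_rfl
    have h3 : 1 ≤ n := by
      rw [← hB.1]; exact card_pos.2 ⟨x, hx⟩
    omega

lemma two_le_of_mem {b : ℕ} (hb : b ∈ B) : 2 ≤ b := by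
  have h1 : 1 ≤ cnt B b := one_le_cnt hb le_rfl
  have h2 := hB.2.1 b
  omega

lemma two_le_mn (hn : 1 ≤ n) : 2 ≤ mn B :=
  two_le_of_mem hB (mn_mem (basis_nonempty hB hn))

omit hB in
lemma cnt_lt_mn {m : ℕ} (h : m < mn B) : cnt B m = 0 := by
  unfold cnt
  rw [card_eq_zero, filter_eq_empty_iff]
  intro x hx hle
  have := mn_le hx
  omega

lemma mn_le_succ_n (hn : 1 ≤ n) : mn B ≤ n + 1 := by
  have h2 := two_le_mn hB hn
  have hmem := mn_mem (basis_nonempty hB hn)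
  have hle : mn B ≤ 2 * n := (mem_Icc.1 (basis_subset hB hmem)).2
  have h3 := hB.2.2 (mn B - 1) (by omega)
  rw [cnt_lt_mn (by omega)] at h3
  omega

lemma cnt_twon : cnt B (2 * n) = n := by
  have h1 : cnt B (2 * n) ≤ n := hB.1 ▸ cnt_le_card B (2 * n)
  have h2 := hB.2.2 (2 * n) le_rfl
  omega

lemma twon_mem (hn : 1 ≤ n) : 2 * n ∈ B := by
  have h1 := hB.2.2 (2 * n - 1) (by omega)
  have h2 := hB.2.1 (2 * n - 1)
  have h3 := cnt_succ B (2 * n - 1)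
  have h4 : 2 * n - 1 + 1 = 2 * n := by omega
  rw [h4] at h3
  rw [cnt_twon hB] at h3
  by_contra hc
  rw [if_neg hc] at h3
  omega

lemma one_le_intA (hn : 1 ≤ n) : 1 ≤ intA B := by
  refine card_pos.2 ⟨2 * n, mem_filter.2 ⟨twon_mem hB hn, ?_⟩⟩
  rw [cnt_twon hB]

lemma intA_le_n : intA B ≤ n := hB.1 ▸ card_le_card (filter_subset _ _)

/-- downward swap: exchanging the largest element of `B` below `e` for `e`
preserves the basis property. -/
lemma swap_down {e : ℕ} (he : e ∉ B) (he1 : 1 ≤ e) (he2 : e ≤ 2 * n)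
    (hne : (B.filter (fun x => x < e)).Nonempty) :
    IsBasis n (insert e ((B.erase ((B.filter (fun x => x < e)).max' hne)))) := by
  set y := (B.filter (fun x => x < e)).max' hne with hy
  have hymem : y ∈ B.filter (fun x => x < e) := max'_mem _ hne
  have hyB : y ∈ B := (mem_filter.1 hymem).1
  have hye : y < e := (mem_filter.1 hymem).2
  have hcnt := cnt_swap (B := B) (y := e) (b := y) he hyB
  have hmax : ∀ z ∈ B, z < e → z ≤ y := by
    intro z hz hze
    have hmem2 : z ∈ B.filter (fun x => x < e) := mem_filter.2 ⟨hz, hze⟩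
    exact le_max' _ z hmem2
  refine ⟨?_, ?_, ?_⟩
  · rw [card_insert_of_notMem (fun hc => he (mem_of_mem_erase hc)),
      card_erase_of_mem hyB, hB.1]
    have : 1 ≤ n := by rw [← hB.1]; exact card_pos.2 ⟨y, hyB⟩
    omega
  · intro m
    have h1 := hcnt m
    have h2 := hB.2.1 m
    split_ifs at h1 <;> omega
  · intro m hm
    have h1 := hcnt m
    have h2 := hB.2.2 m hm
    by_cases hym : y ≤ m
    · by_cases hem : e ≤ m
      · rw [if_pos hym, if_pos hem] at h1; omega
      · -- y ≤ m < e
        rw [if_pos hym, if_neg hem] at h1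
        have h3 := hB.2.2 (m + 1) (by omega)
        have h4 := cnt_succ B m
        have h5 : m + 1 ∉ B := by
          intro hc
          rcases Nat.lt_or_ge (m + 1) e with h' | h'
          · have := hmax _ hc h'; omega
          · have : m + 1 = e := by omega
            exact he (this ▸ hc)
        rw [if_neg h5] at h4
        omega
    · have hem : ¬ e ≤ m := by omega
      rw [if_neg hym, if_neg hem] at h1; omega

/-- upward swap: if `b ∈ B` is not a return, some smaller non-element can
replace it. -/
lemma swap_up {b : ℕ} (hb : b ∈ B) (hnr : 2 * cnt B b ≠ b) :
    ∃ y, (y ∈ Icc 1 (2 * n) ∧ y ∉ B) ∧ y < b ∧ IsBasis n (insert y (B.erase b)) := by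
  have hb2 : 2 ≤ b := two_le_of_mem hB hb
  have hb2n : b ≤ 2 * n := (mem_Icc.1 (basis_subset hB hb)).2
  have hne : ((range b).filter (fun x => x ∉ B)).Nonempty := by
    refine ⟨0, mem_filter.2 ⟨mem_range.2 (by omega), ?_⟩⟩
    intro hc
    have := two_le_of_mem hB hc
    omega
  set y := ((range b).filter (fun x => x ∉ B)).max' hne with hy
  have hymem := max'_mem _ hne
  have hyb : y < b := mem_range.1 (mem_filter.1 hymem).1
  have hyB : y ∉ B := (mem_filter.1 hymem).2
  have hmax : ∀ z, z < b → z ∉ B → z ≤ y := by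
    intro z hz1 hz2
    have hmem2 : z ∈ (range b).filter (fun x => x ∉ B) := mem_filter.2 ⟨mem_range.2 hz1, hz2⟩
    exact le_max' _ z hmem2
  have hfill : ∀ z, y < z → z ≤ b → z ∈ B := by
    intro z hz1 hz2
    rcases Nat.lt_or_ge z b with h' | h'
    · by_contra hc
      have := hmax z h' hc
      omega
    · have : z = b := by omega
      exact this ▸ hb
  have hy1 : 1 ≤ y := by
    by_contra hc
    have hy0 : y = 0 := by omega
    -- then [1, b-1] ⊆ B, contradicting the lower counting condition
    have hsub : Icc 1 (b - 1) ⊆ B.filter (fun x => x ≤ b - 1) := by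
      intro z hz
      rcases mem_Icc.1 hz with ⟨hz1, hz2⟩
      exact mem_filter.2 ⟨hfill z (by omega) (by omega), hz2⟩
    have h1 : b - 1 ≤ cnt B (b - 1) := by
      have := card_le_card hsub
      rwa [Nat.card_Icc, Nat.add_sub_cancel] at this
    have h2 := hB.2.1 (b - 1)
    omega
  -- key counting estimate
  have hkey : ∀ m, y ≤ m → m < b → cnt B m + (b - m) ≤ cnt B b := by
    intro m hym hmb
    have hdisj : Disjoint (B.filter (fun x => x ≤ m)) (Icc (m + 1) b) := by
      rw [disjoint_left]
      intro z hz1 hz2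
      have := (mem_filter.1 hz1).2
      have := (mem_Icc.1 hz2).1
      omega
    have hsub : (B.filter (fun x => x ≤ m)) ∪ Icc (m + 1) b ⊆ B.filter (fun x => x ≤ b) := by
      intro z hz
      rcases mem_union.1 hz with h' | h'
      · rcases mem_filter.1 h' with ⟨h1, h2⟩
        exact mem_filter.2 ⟨h1, by omega⟩
      · rcases mem_Icc.1 h' with ⟨h1, h2⟩
        exact mem_filter.2 ⟨hfill z (by omega) h2, h2⟩
    have := card_le_card hsub
    rw [card_union_of_disjoint hdisj, Nat.card_Icc] at this
    unfold cnt
    omega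
  have hcnt := cnt_swap (B := B) (y := y) (b := b) hyB hb
  refine ⟨y, ⟨mem_Icc.2 ⟨hy1, by omega⟩, hyB⟩, hyb, ?_, ?_, ?_⟩
  · rw [card_insert_of_notMem (fun hc => hyB (mem_of_mem_erase hc)),
      card_erase_of_mem hb, hB.1]
    have : 1 ≤ n := by rw [← hB.1]; exact card_pos.2 ⟨b, hb⟩
    omega
  · intro m
    have h1 := hcnt m
    have h2 := hB.2.1 m
    by_cases hym : y ≤ m
    · by_cases hbm : b ≤ m
      · rw [if_pos hym, if_pos hbm] at h1; omega
      · rw [if_pos hym, if_neg hbm] at h1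
        have h3 := hkey m hym (by omega)
        have h4 := hB.2.1 b
        omega
    · have hbm : ¬ b ≤ m := by omega
      rw [if_neg hym, if_neg hbm] at h1; omega
  · intro m hm
    have h1 := hcnt m
    have h2 := hB.2.2 m hm
    split_ifs at h1 <;> omega

omit hB in
/-- returns are internally active: no smaller non-element can replace a return. -/
lemma no_swap_of_return {b y : ℕ} (hb : b ∈ B) (hr : 2 * cnt B b = b)
    (hyB : y ∉ B) (hyb : y < b) : ¬ IsBasis n (insert y (B.erase b)) := by
  intro hC
  have hb1 : 1 ≤ b := by omega
  have hcnt := cnt_swap (B := B) (y := y) (b := b) hyB hb (b - 1)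
  rw [if_neg (by omega), if_pos (by omega)] at hcnt
  have h4 : cnt B b = cnt B (b - 1) + 1 := cnt_mem_succ hb hb1
  have h5 := hC.2.1 (b - 1)
  omega

end basisfacts


lemma le_mn {B : Finset ℕ} {c : ℕ} (hne : B.Nonempty) (h : ∀ x ∈ B, c ≤ x) : c ≤ mn B :=
  h _ (mn_mem hne)

lemma mn_eq {B : Finset ℕ} {a : ℕ} (ha : a ∈ B) (h : ∀ x ∈ B, a ≤ x) : mn B = a :=
  le_antisymm (mn_le ha) (h _ (mn_mem ⟨a, ha⟩))

lemma cnt_mn {B : Finset ℕ} (hne : B.Nonempty) (h1 : 1 ≤ mn B) : cnt B (mn B) = 1 := by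
  rw [cnt_mem_succ (mn_mem hne) h1, cnt_lt_mn (by omega)]

/-- the external activity of a basis is `min B - 1`. -/
lemma extAct_eq {n : ℕ} {B : Finset ℕ} (hB : IsBasis n B) (hn : 1 ≤ n) :
    extAct (2 * n) n (fun j => 2 * ((j : ℕ) + 1)) (fun j => n + (j : ℕ) + 1) B
      = mn B - 1 := by
  unfold extAct
  have hset : (Icc 1 (2 * n) \ B).filter (fun e => ¬ ∃ y ∈ B, y < e ∧
      IsTransLH n (fun j => 2 * ((j : ℕ) + 1)) (fun j => n + (j : ℕ) + 1)
        (insert e (B.erase y))) = Ico 1 (mn B) := by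
    ext e
    simp only [mem_filter, mem_sdiff, mem_Icc, mem_Ico]
    constructor
    · rintro ⟨⟨⟨he1, he2⟩, heB⟩, hna⟩
      refine ⟨he1, ?_⟩
      by_contra hc
      push_neg at hc
      have hmn : mn B < e := lt_of_le_of_ne hc (fun h => heB (h ▸ mn_mem (basis_nonempty hB hn)))
      have hne : (B.filter (fun x => x < e)).Nonempty :=
        ⟨mn B, mem_filter.2 ⟨mn_mem (basis_nonempty hB hn), hmn⟩⟩
      set y := (B.filter (fun x => x < e)).max' hne with hy
      have hymem := max'_mem _ hne
      exact hna ⟨y, (mem_filter.1 hymem).1, (mem_filter.1 hymem).2,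
        (isTrans_iff _).2 (swap_down hB heB he1 he2 hne)⟩
    · rintro ⟨he1, he2⟩
      have heB : e ∉ B := fun hc => absurd (mn_le hc) (by omega)
      have hmn2 := mn_le_succ_n hB hn
      refine ⟨⟨⟨he1, by omega⟩, heB⟩, ?_⟩
      rintro ⟨y, hyB, hye, -⟩
      have := mn_le hyB
      omega
  rw [hset, Nat.card_Ico]

/-- the internal activity of a basis is the number of returns. -/
lemma intAct_eq {n : ℕ} {B : Finset ℕ} (hB : IsBasis n B) :
    intAct (2 * n) n (fun j => 2 * ((j : ℕ) + 1)) (fun j => n + (j : ℕ) + 1) B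
      = intA B := by
  unfold intAct intA
  congr 1
  ext b
  simp only [mem_filter]
  constructor
  · rintro ⟨hb, hna⟩
    refine ⟨hb, ?_⟩
    by_contra hnr
    rcases swap_up hB hb hnr with ⟨y, ⟨hy1, hy2⟩, hy3, hy4⟩
    exact hna ⟨y, mem_sdiff.2 ⟨hy1, hy2⟩, hy3, (isTrans_iff _).2 hy4⟩
  · rintro ⟨hb, hr⟩
    refine ⟨hb, ?_⟩
    rintro ⟨y, hy, hyb, htr⟩
    have hyB : y ∉ B := (mem_sdiff.1 hy).2
    exact no_swap_of_return hb hr hyB hyb ((isTrans_iff _).1 htr)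

/-- the set of bases of the Catalan matroid `M_n`. -/
noncomputable def bases (n : ℕ) : Finset (Finset ℕ) :=
  (Icc 1 (2 * n)).powerset.filter (IsBasis n)

lemma mem_bases {n : ℕ} {B : Finset ℕ} : B ∈ bases n ↔ IsBasis n B := by
  unfold bases
  simp only [mem_filter, mem_powerset]
  exact ⟨fun h => h.2, fun h => ⟨basis_subset h, h⟩⟩

/-- the set of bases with internal activity `i` and external activity `j`. -/
noncomputable def fiber (n i j : ℕ) : Finset (Finset ℕ) :=
  (bases n).filter (fun B => intA B = i ∧ mn B = j + 1)

/-- contraction-deletion map: delete the minimum, shift everything down by 2. -/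
noncomputable def Φ (B : Finset ℕ) : Finset ℕ :=
  (B.erase (mn B)).image (fun x => x - 2)

section phi

variable {n : ℕ} {B : Finset ℕ} (hB : IsBasis n B) (hn : 2 ≤ n)
include hB hn

lemma phi_cnt (m : ℕ) :
    cnt (Φ B) m + (if mn B ≤ m + 2 then 1 else 0) = cnt B (m + 2) := by
  have hinj : Set.InjOn (fun x => x - 2) ↑(B.erase (mn B)) := by
    intro a ha b hb hab
    have ha2 := two_le_of_mem hB (mem_of_mem_erase ha)
    have hb2 := two_le_of_mem hB (mem_of_mem_erase hb)
    simp only at hab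
    omega
  have h1 : cnt (Φ B) m = cnt (B.erase (mn B)) (m + 2) := by
    unfold Φ cnt
    rw [filter_image]
    rw [card_image_of_injOn (hinj.mono (by
      intro x hx
      exact (mem_filter.1 hx).1))]
    congr 1
    apply filter_congr
    intro x hx
    have hx2 := two_le_of_mem hB (mem_of_mem_erase hx)
    constructor <;> intro h <;> omega
  rw [h1, cnt_erase (mn_mem (basis_nonempty hB (by omega))) (m + 2)]

lemma phi_basis : IsBasis (n - 1) (Φ B) := by
  have hmn2 := two_le_mn hB (by omega)
  have hmnle := mn_le_succ_n hB (by omega)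
  have hcard : (Φ B).card = n - 1 := by
    unfold Φ
    rw [card_image_of_injOn (by
      intro a ha b hb hab
      have ha2 := two_le_of_mem hB (mem_of_mem_erase ha)
      have hb2 := two_le_of_mem hB (mem_of_mem_erase hb)
      simp only at hab
      omega)]
    rw [card_erase_of_mem (mn_mem (basis_nonempty hB (by omega))), hB.1]
  refine ⟨hcard, ?_, ?_⟩
  · intro m
    have h1 := phi_cnt hB hn m
    have h2 := hB.2.1 (m + 2)
    split_ifs at h1 with h
    · omega
    · push_neg at h
      have := cnt_lt_mn (B := B) (m := m + 2) (by omega)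
      omega
  · intro m hm
    have h1 := phi_cnt hB hn m
    have h2 := hB.2.2 (m + 2) (by omega)
    split_ifs at h1 with h
    · omega
    · push_neg at h
      omega

lemma phi_intA : intA B = intA (Φ B) + (if mn B = 2 then 1 else 0) := by
  have hmn2 := two_le_mn hB (by omega)
  have hne := basis_nonempty hB (by omega : 1 ≤ n)
  have hset : (Φ B).filter (fun c => 2 * cnt (Φ B) c = c)
      = ((B.filter (fun b => 2 * cnt B b = b)).erase (mn B)).image (fun x => x - 2) := by
    ext c
    constructor
    · intro hc
      rcases mem_filter.1 hc with ⟨hcmem, hret⟩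
      have hcmem' : c ∈ (B.erase (mn B)).image (fun x => x - 2) := hcmem
      rcases mem_image.1 hcmem' with ⟨x, hx, rfl⟩
      have hxB := mem_of_mem_erase hx
      have hx2 := two_le_of_mem hB hxB
      have hxmn : x ≠ mn B := (mem_erase.1 hx).1
      have hcnt := phi_cnt hB hn (x - 2)
      rw [if_pos (by have := mn_le hxB; omega)] at hcnt
      have hx22 : x - 2 + 2 = x := by omega
      rw [hx22] at hcnt
      exact mem_image.2 ⟨x, mem_erase.2 ⟨hxmn, mem_filter.2 ⟨hxB, by omega⟩⟩, rfl⟩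
    · intro hc
      rcases mem_image.1 hc with ⟨x, hx', rfl⟩
      rcases mem_erase.1 hx' with ⟨hxmn, hxf⟩
      rcases mem_filter.1 hxf with ⟨hxB, hret⟩
      have hx2 := two_le_of_mem hB hxB
      have hcnt := phi_cnt hB hn (x - 2)
      rw [if_pos (by have := mn_le hxB; omega)] at hcnt
      have hx22 : x - 2 + 2 = x := by omega
      rw [hx22] at hcnt
      refine mem_filter.2 ⟨?_, by omega⟩
      show _ ∈ (B.erase (mn B)).image (fun x => x - 2)
      exact mem_image.2 ⟨x, mem_erase.2 ⟨hxmn, hxB⟩, rfl⟩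
  have hinj : Set.InjOn (fun x => x - 2)
      ↑((B.filter (fun b => 2 * cnt B b = b)).erase (mn B)) := by
    intro a ha b hb hab
    have ha2 := two_le_of_mem hB (mem_filter.1 (mem_of_mem_erase ha)).1
    have hb2 := two_le_of_mem hB (mem_filter.1 (mem_of_mem_erase hb)).1
    simp only at hab
    omega
  unfold intA
  rw [hset, card_image_of_injOn hinj]
  by_cases hmn : mn B = 2
  · have hmem : mn B ∈ B.filter (fun b => 2 * cnt B b = b) :=
      mem_filter.2 ⟨mn_mem hne, by rw [cnt_mn hne (by omega)]; omega⟩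
    rw [card_erase_of_mem hmem, if_pos hmn]
    have h1 : 1 ≤ (B.filter (fun b => 2 * cnt B b = b)).card := card_pos.2 ⟨mn B, hmem⟩
    omega
  · have hmem : mn B ∉ B.filter (fun b => 2 * cnt B b = b) := by
      intro hc
      have h1 := (mem_filter.1 hc).2
      have h2 := cnt_mn hne (by omega)
      omega
    rw [erase_eq_of_notMem hmem, if_neg hmn]
    omega

lemma phi_recon : insert (mn B) ((Φ B).image (fun x => x + 2)) = B := by
  unfold Φ
  rw [image_image]
  have heq : (B.erase (mn B)).image ((fun x => x + 2) ∘ (fun x => x - 2))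
      = B.erase (mn B) := by
    rw [image_congr (g := (id : ℕ → ℕ)) (by
      intro x hx
      have hx2 := two_le_of_mem hB (mem_of_mem_erase hx)
      simp only [Function.comp, id]
      omega), image_id]
  rw [heq, insert_erase (mn_mem (basis_nonempty hB (by omega)))]

end phi

lemma mem_fiber {n i j : ℕ} {B : Finset ℕ} :
    B ∈ fiber n i j ↔ IsBasis n B ∧ intA B = i ∧ mn B = j + 1 := by
  unfold fiber
  rw [mem_filter, mem_bases]

/-- the contraction recurrence, bijective form. -/
lemma fiber_rec {n i j : ℕ} (hn : 2 ≤ n) (hi : 1 ≤ i) (hj : 1 ≤ j) (hjn : j ≤ n) :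
    (fiber n i j).card = ((bases (n - 1)).filter
      (fun C => intA C = i - (if j = 1 then 1 else 0) ∧ j ≤ mn C)).card := by
  apply card_bij (fun B _ => Φ B)
  · -- maps to
    intro B hBmem
    rcases mem_fiber.1 hBmem with ⟨hB, hiB, hmnB⟩
    have hphib := phi_basis hB hn
    refine mem_filter.2 ⟨mem_bases.2 hphib, ?_, ?_⟩
    · have h1 := phi_intA hB hn
      rw [hmnB] at h1
      by_cases hj1 : j = 1
      · rw [if_pos hj1]
        rw [if_pos (show j + 1 = 2 by omega)] at h1
        omega
      · rw [if_neg hj1]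
        rw [if_neg (show ¬ j + 1 = 2 by omega)] at h1
        omega
    · have hnem : (Φ B).Nonempty := by
        rw [← card_pos, hphib.1]
        omega
      apply le_mn hnem
      intro x hx
      rcases mem_image.1 hx with ⟨z, hz, rfl⟩
      have hz1 : z ≠ mn B := (mem_erase.1 hz).1
      have hz2 := mn_le (mem_of_mem_erase hz)
      omega
  · -- injective
    intro B1 h1 B2 h2 heq
    rcases mem_fiber.1 h1 with ⟨hB1, hi1, hm1⟩
    rcases mem_fiber.1 h2 with ⟨hB2, hi2, hm2⟩
    have r1 := phi_recon hB1 hn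
    have r2 := phi_recon hB2 hn
    rw [← r1, ← r2, heq, hm1, hm2]
  · -- surjective
    intro C hC
    rcases mem_filter.1 hC with ⟨hCb, hiC, hmnC⟩
    have hC' := mem_bases.1 hCb
    have hC2 : ∀ x ∈ C, 2 ≤ x := fun x hx => two_le_of_mem hC' hx
    set B := insert (j + 1) (C.image (fun x => x + 2)) with hBdef
    have hnotmem : (j + 1) ∉ C.image (fun x => x + 2) := by
      simp only [mem_image]
      rintro ⟨x, hx, hxe⟩
      have := mn_le hx
      omega
    have himinj : Set.InjOn (fun x => x + 2) ↑C :=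
      fun a _ b _ hab => by simp only at hab; omega
    have hcntim : ∀ m, cnt (C.image (fun x => x + 2)) m = cnt C (m - 2) := by
      intro m
      unfold cnt
      rw [filter_image, card_image_of_injOn (himinj.mono (by
        intro x hx
        exact (mem_filter.1 hx).1))]
      congr 1
      apply filter_congr
      intro x hx
      have := hC2 x hx
      constructor <;> intro h <;> omega
    have hcntB : ∀ m, cnt B m = cnt C (m - 2) + (if j + 1 ≤ m then 1 else 0) := by
      intro m
      rw [hBdef, cnt_insert hnotmem, hcntim]
    have hBbasis : IsBasis n B := by
      refine ⟨?_, ?_, ?_⟩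
      · rw [hBdef, card_insert_of_notMem hnotmem, card_image_of_injOn himinj, hC'.1]
        omega
      · intro m
        have h1 := hcntB m
        split_ifs at h1 with h
        · have h2 := hC'.2.1 (m - 2)
          omega
        · have h0 : cnt C (m - 2) = 0 := cnt_lt_mn (by omega)
          omega
      · intro m hm
        have h1 := hcntB m
        split_ifs at h1 with h
        · have h2 := hC'.2.2 (m - 2) (by omega)
          omega
        · omega
    have hmnB : mn B = j + 1 := by
      apply mn_eq (by rw [hBdef]; exact mem_insert_self _ _)
      intro x hx
      rw [hBdef] at hx
      rcases mem_insert.1 hx with rfl | hx'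
      · exact le_rfl
      · rcases mem_image.1 hx' with ⟨z, hz, rfl⟩
        have := mn_le hz
        omega
    have hphi : Φ B = C := by
      unfold Φ
      rw [hmnB, hBdef, erase_insert hnotmem, image_image]
      rw [image_congr (g := (id : ℕ → ℕ)) (by
        intro x hx
        simp only [Function.comp, id]
        omega), image_id]
    have hintA : intA B = i := by
      have h1 := phi_intA hBbasis hn
      rw [hphi, hiC, hmnB] at h1
      by_cases hj1 : j = 1
      · rw [if_pos hj1, if_pos (show j + 1 = 2 by omega)] at h1
        omega
      · rw [if_neg hj1, if_neg (show ¬ j + 1 = 2 by omega)] at h1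
        omega
    exact ⟨B, mem_fiber.2 ⟨hBbasis, hintA, hmnB⟩, hphi⟩

/-- splitting a filtered set of bases by the value of the minimum. -/
lemma card_split {m i' a : ℕ} (hm : 1 ≤ m) (ha : 1 ≤ a) :
    ((bases m).filter (fun C => intA C = i' ∧ a + 1 ≤ mn C)).card
      = ∑ j' ∈ Icc a m, (fiber m i' j').card := by
  rw [card_eq_sum_card_fiberwise (f := fun C => mn C - 1) (t := Icc a m) (by
    intro C hC
    rcases mem_filter.1 hC with ⟨hb, -, hge⟩
    have h1 := mn_le_succ_n (mem_bases.1 hb) hm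
    simp only [Finset.mem_coe, mem_Icc]
    omega)]
  apply Finset.sum_congr rfl
  intro j' hj'
  rcases mem_Icc.1 hj' with ⟨hj1, hj2⟩
  congr 1
  ext C
  simp only [mem_filter, mem_fiber, mem_bases]
  constructor
  · rintro ⟨⟨hb, hi', hge⟩, hmn⟩
    exact ⟨hb, hi', by omega⟩
  · rintro ⟨hb, hi', hmn⟩
    have h2 := two_le_mn hb hm
    exact ⟨⟨hb, hi', by omega⟩, by omega⟩

/-- the full recurrence. -/
lemma fiber_card_eq_sum {n i j : ℕ} (hn : 2 ≤ n) (hi : 1 ≤ i) (hj : 1 ≤ j) (hjn : j ≤ n) :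
    (fiber n i j).card = ∑ j' ∈ Icc (max (j - 1) 1) (n - 1),
      (fiber (n - 1) (i - (if j = 1 then 1 else 0)) j').card := by
  rw [fiber_rec hn hi hj hjn, ← card_split (by omega) (by omega)]
  congr 1
  apply filter_congr
  intro C hC
  have h2 := two_le_mn (mem_bases.1 hC) (by omega : 1 ≤ n - 1)
  constructor
  · rintro ⟨h1, h3⟩
    exact ⟨h1, by omega⟩
  · rintro ⟨h1, h3⟩
    exact ⟨h1, by omega⟩


/-- the (integral!) value `(s-2)/(n-1) * C(2n-s-1, n+1-s)` of the Tutte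
coefficient, written as a difference of binomial coefficients. -/
noncomputable def Fq (n s : ℕ) : ℚ :=
  if 2 ≤ s ∧ s ≤ n + 1 then
    (((2 * n - s - 1).choose (n - 2) : ℕ) : ℚ) - (((2 * n - s - 1).choose (n - 1) : ℕ) : ℚ)
  else 0

lemma Fq_of_gt {n s : ℕ} (h : n + 1 < s) : Fq n s = 0 := if_neg (by omega)

lemma Fq_self {n : ℕ} (hn : 2 ≤ n) : Fq n (n + 1) = 1 := by
  rw [Fq, if_pos (by omega : 2 ≤ n + 1 ∧ n + 1 ≤ n + 1)]
  have e1 : 2 * n - (n + 1) - 1 = n - 2 := by omega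
  rw [e1, Nat.choose_self, Nat.choose_eq_zero_of_lt (by omega)]
  norm_num

lemma Fq_two {n : ℕ} (hn : 2 ≤ n) : Fq n 2 = 0 := by
  rw [Fq, if_pos (by omega : 2 ≤ 2 ∧ 2 ≤ n + 1)]
  have hsym : (2 * n - 2 - 1).choose (n - 1) = (2 * n - 2 - 1).choose (n - 2) := by
    have e : (2 * n - 2 - 1) - (n - 2) = n - 1 := by omega
    rw [← e, Nat.choose_symm (by omega)]
  rw [hsym]
  ring

lemma Fq_three {n s : ℕ} (hn : 2 ≤ n) (hs : 3 ≤ s) (hsn : s ≤ n + 1) :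
    Fq (n + 1) s = Fq (n + 1) (s + 1) + Fq n (s - 1) := by
  rw [Fq, Fq, Fq, if_pos (by omega : 2 ≤ s ∧ s ≤ n + 1 + 1),
    if_pos (by omega : 2 ≤ s + 1 ∧ s + 1 ≤ n + 1 + 1),
    if_pos (by omega : 2 ≤ s - 1 ∧ s - 1 ≤ n + 1)]
  have e1 : 2 * (n + 1) - s - 1 = (2 * n - s) + 1 := by omega
  have e2 : (n + 1) - 2 = (n - 2) + 1 := by omega
  have e3 : (n + 1) - 1 = ((n - 2) + 1) + 1 := by omega
  have e4 : 2 * (n + 1) - (s + 1) - 1 = 2 * n - s := by omega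
  have e5 : 2 * n - (s - 1) - 1 = 2 * n - s := by omega
  have e6 : n - 1 = (n - 2) + 1 := by omega
  rw [e1, e2, e3, e4, e5, e6,
    Nat.choose_succ_succ (2 * n - s) (n - 2),
    Nat.choose_succ_succ (2 * n - s) ((n - 2) + 1)]
  push_cast
  ring

lemma Fq_sum_top {n : ℕ} (hn : 2 ≤ n) {s : ℕ} (hs : n + 2 ≤ s) :
    ∑ t ∈ Icc (s - 1) (n + 1), Fq n t = Fq (n + 1) s := by
  rcases eq_or_lt_of_le hs with heq | h
  · have e : s - 1 = n + 1 := by omega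
    rw [e, Finset.Icc_self, Finset.sum_singleton, Fq_self hn, ← heq]
    have := Fq_self (n := n + 1) (by omega)
    rw [show n + 1 + 1 = n + 2 from rfl] at this
    rw [this]
  · rw [Finset.Icc_eq_empty (by omega), Finset.sum_empty, Fq_of_gt (by omega)]

lemma Fq_sum {n : ℕ} (hn : 2 ≤ n) (s : ℕ) (hs : 3 ≤ s) :
    ∑ t ∈ Icc (s - 1) (n + 1), Fq n t = Fq (n + 1) s := by
  have key : ∀ d : ℕ, ∀ s, 3 ≤ s → n + 2 ≤ s + d →
      ∑ t ∈ Icc (s - 1) (n + 1), Fq n t = Fq (n + 1) s := by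
    intro d
    induction d with
    | zero =>
      intro s hs3 hd
      exact Fq_sum_top hn (by omega)
    | succ d IH =>
      intro s hs3 hd
      rcases le_or_gt (n + 2) s with h | h
      · exact Fq_sum_top hn h
      · have hins : Icc (s - 1) (n + 1) = insert (s - 1) (Icc s (n + 1)) := by
          ext x
          simp only [mem_Icc, mem_insert]
          omega
        have hnotin : s - 1 ∉ Icc s (n + 1) := by
          simp only [mem_Icc]
          omega
        rw [hins, sum_insert hnotin]
        have hIH := IH (s + 1) (by omega) (by omega)
        rw [show s + 1 - 1 = s from by omega] at hIH
        rw [hIH, Fq_three hn hs3 (by omega)]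
        ring
  exact key (n + 2) s hs (by omega)

lemma fiber_zero_card {n j : ℕ} (hn : 1 ≤ n) : (fiber n 0 j).card = 0 := by
  rw [Finset.card_eq_zero, eq_empty_iff_forall_notMem]
  intro B hB
  rcases mem_fiber.1 hB with ⟨hB', hi, -⟩
  have := one_le_intA hB' hn
  omega

lemma cnt_singleton_two (m : ℕ) : cnt ({2} : Finset ℕ) m = if 2 ≤ m then 1 else 0 := by
  unfold cnt
  rw [filter_singleton]
  split_ifs <;> simp

lemma isBasis_one_iff {B : Finset ℕ} : IsBasis 1 B ↔ B = {2} := by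
  constructor
  · intro h
    rcases Finset.card_eq_one.1 h.1 with ⟨b, rfl⟩
    have h2 := two_le_of_mem h (mem_singleton_self b)
    have h3 := (mem_Icc.1 (basis_subset h (mem_singleton_self b))).2
    have : b = 2 := by omega
    rw [this]
  · rintro rfl
    refine ⟨card_singleton 2, fun m => ?_, fun m hm => ?_⟩
    · rw [cnt_singleton_two]
      split_ifs <;> omega
    · rw [cnt_singleton_two]
      split_ifs <;> omega

lemma intA_two : intA ({2} : Finset ℕ) = 1 := by
  unfold intA
  rw [filter_singleton, if_pos (by rw [cnt_singleton_two]; norm_num)]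
  exact card_singleton 2

lemma mn_two : mn ({2} : Finset ℕ) = 2 :=
  mn_eq (mem_singleton_self 2) (fun x hx => by rw [mem_singleton] at hx; omega)

lemma fiber_one_card (i j : ℕ) : (fiber 1 i j).card = if i = 1 ∧ j = 1 then 1 else 0 := by
  split_ifs with h
  · rcases h with ⟨rfl, rfl⟩
    have : fiber 1 1 1 = {({2} : Finset ℕ)} := by
      ext B
      rw [mem_fiber, mem_singleton]
      constructor
      · rintro ⟨hB, -, -⟩
        exact isBasis_one_iff.1 hB
      · rintro rfl
        exact ⟨isBasis_one_iff.2 rfl, intA_two, by rw [mn_two]⟩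
    rw [this, card_singleton]
  · rw [Finset.card_eq_zero, eq_empty_iff_forall_notMem]
    intro B hB
    rcases mem_fiber.1 hB with ⟨hB', hi, hj⟩
    have hB2 := isBasis_one_iff.1 hB'
    subst hB2
    rw [intA_two] at hi
    rw [mn_two] at hj
    exact h ⟨hi.symm, by omega⟩

/-- Main enumeration: the number of bases of `M_n` with internal activity `i`
and external activity `j` is `Fq n (i+j)`. -/
lemma fiber_card_eq (n : ℕ) (hn : 2 ≤ n) : ∀ i j, 1 ≤ i → 1 ≤ j → j ≤ n →
    ((fiber n i j).card : ℚ) = Fq n (i + j) := by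
  induction n, hn using Nat.le_induction with
  | base =>
    intro i j hi hj hjn
    rw [fiber_card_eq_sum le_rfl hi hj hjn]
    have hIcc : Icc (max (j - 1) 1) (2 - 1) = {1} := by
      ext x
      simp only [mem_Icc, mem_singleton]
      omega
    rw [hIcc, Finset.sum_singleton, fiber_one_card]
    rcases (by omega : j = 1 ∨ j = 2) with rfl | rfl
    · rcases (by omega : i = 1 ∨ i = 2 ∨ 3 ≤ i) with rfl | rfl | h3
      · rw [Fq_two (by norm_num)]
        norm_num
      · rw [show (2 : ℕ) + 1 = 2 + 1 from rfl, Fq_self (by norm_num)]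
        norm_num
      · rw [Fq_of_gt (by omega)]
        rw [if_neg (show ¬ ((i - if (1:ℕ) = 1 then 1 else 0) = 1 ∧ (1:ℕ) = 1) by simp; omega)]
        norm_num
    · rcases (by omega : i = 1 ∨ 2 ≤ i) with rfl | h2
      · rw [show (1 : ℕ) + 2 = 2 + 1 from rfl, Fq_self (by norm_num)]
        norm_num
      · rw [Fq_of_gt (by omega)]
        rw [if_neg (show ¬ ((i - if (2:ℕ) = 1 then 1 else 0) = 1 ∧ (1:ℕ) = 1) by simp; omega)]
        norm_num
  | succ n hn IH =>
    intro i j hi hj hjn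
    rw [fiber_card_eq_sum (by omega) hi hj hjn]
    rw [show n + 1 - 1 = n from rfl]
    by_cases hij : i = 1 ∧ j = 1
    · rcases hij with ⟨rfl, rfl⟩
      rw [if_pos rfl]
      have hz : ∀ j' ∈ Icc (max (1 - 1) 1) n, (fiber n (1 - 1) j').card = 0 := by
        intro j' _
        exact fiber_zero_card (by omega)
      rw [Finset.sum_congr rfl hz, Finset.sum_const, smul_zero]
      rw [show (1 : ℕ) + 1 = 2 from rfl, Fq_two (by omega)]
      norm_num
    · set c := i - (if j = 1 then 1 else 0) with hc
      have hc1 : 1 ≤ c := by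
        rw [hc]
        split_ifs with h1 <;> omega
      have hs3 : 3 ≤ i + j := by omega
      push_cast
      have hstep : ∀ j' ∈ Icc (max (j - 1) 1) n,
          ((fiber n c j').card : ℚ) = Fq n (c + j') := by
        intro j' hj'
        rcases mem_Icc.1 hj' with ⟨h1, h2⟩
        exact IH c j' hc1 (by omega) h2
      rw [Finset.sum_congr rfl hstep]
      have hreindex : ∑ j' ∈ Icc (max (j - 1) 1) n, Fq n (c + j')
          = ∑ t ∈ Icc (c + max (j - 1) 1) (c + n), Fq n t := by
        rw [← Finset.map_add_left_Icc, Finset.sum_map]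
        apply Finset.sum_congr rfl
        intro x _
        congr 1
      rw [hreindex]
      have hlow : c + max (j - 1) 1 = i + j - 1 := by
        rw [hc]
        split_ifs with h1 <;> omega
      have hhigh : n + 1 ≤ c + n := by omega
      have htrunc : ∑ t ∈ Icc (c + max (j - 1) 1) (c + n), Fq n t
          = ∑ t ∈ Icc (i + j - 1) (n + 1), Fq n t := by
        rw [hlow]
        apply (Finset.sum_subset ?_ ?_).symm
        · intro t ht
          rcases mem_Icc.1 ht with ⟨h1, h2⟩
          exact mem_Icc.2 ⟨h1, by omega⟩
        · intro t ht hnt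
          rcases mem_Icc.1 ht with ⟨h1, h2⟩
          have : n + 1 < t := by
            by_contra hcon
            exact hnt (mem_Icc.2 ⟨h1, by omega⟩)
          exact Fq_of_gt this
      rw [htrunc, Fq_sum hn (i + j) hs3]


lemma Fq_eq_coef {n s : ℕ} (hn : 2 ≤ n) (hs2 : 2 ≤ s) (hsn : s ≤ n + 1) :
    Fq n s = ((s - 2 : ℕ) : ℚ) / ((n : ℚ) - 1)
      * ((Nat.choose (2 * n - s - 1) (n + 1 - s) : ℕ) : ℚ) := by
  rw [Fq, if_pos ⟨hs2, hsn⟩]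
  set m := 2 * n - s - 1 with hm
  have hsymm : m.choose (n + 1 - s) = m.choose (n - 2) := by
    have e : m - (n - 2) = n + 1 - s := by omega
    rw [← e, Nat.choose_symm (by omega)]
  rw [hsymm]
  have hkey : m.choose (n - 1) * (n - 1) = m.choose (n - 2) * (n + 1 - s) := by
    have h1 := Nat.choose_succ_right_eq m (n - 2)
    rw [show (n - 2) + 1 = n - 1 from by omega] at h1
    rw [h1]
    congr 1
    omega
  have hkeyQ : (m.choose (n - 1) : ℚ) * ((n : ℚ) - 1)
      = (m.choose (n - 2) : ℚ) * ((n : ℚ) + 1 - (s : ℚ)) := by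
    have h := congrArg (Nat.cast : ℕ → ℚ) hkey
    push_cast [Nat.cast_sub (show 1 ≤ n by omega), Nat.cast_sub (show s ≤ n + 1 by omega)] at h
    convert h using 2 <;> push_cast <;> ring
  have hs2Q : ((s - 2 : ℕ) : ℚ) = (s : ℚ) - 2 := by
    push_cast [Nat.cast_sub hs2]
    ring
  have hne : (n : ℚ) - 1 ≠ 0 := by
    have : (2 : ℚ) ≤ (n : ℚ) := by exact_mod_cast hn
    intro hc
    nlinarith
  rw [hs2Q]
  field_simp
  linear_combination - hkeyQ


end StmtAux

open StmtAux

/-- **Tutte polynomial of the Catalan matroid.**  For `n > 1`,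
`t(M_n; x, y) = Σ_{i,j>0} ((i+j-2)/(n-1)) * (2n-i-j-1 choose n-i-j+1) x^i y^j`
(the sum is over the pairs `i, j ≥ 1` with `i + j ≤ n + 1`; all other coefficients
vanish).  In particular each coefficient depends only on `n` and `i + j`, so the
polynomial is symmetric in `x` and `y`. -/
theorem stmt16 (n : ℕ) (hn : 1 < n) :
    tutteCatalan n
      = ∑ p ∈ (Finset.Icc 1 n ×ˢ Finset.Icc 1 n).filter (fun p => p.1 + p.2 ≤ n + 1),
          MvPolynomial.C (((p.1 + p.2 - 2 : ℕ) : ℚ) / ((n : ℚ) - 1) *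
              (Nat.choose (2 * n - (p.1 + p.2) - 1) (n + 1 - (p.1 + p.2)) : ℚ)) *
            MvPolynomial.X 0 ^ p.1 * MvPolynomial.X 1 ^ p.2 := by
  have hn2 : 2 ≤ n := hn
  unfold tutteCatalan
  have hS : (Finset.Icc 1 (2 * n)).powerset.filter
      (IsTransLH n (fun j => 2 * ((j : ℕ) + 1)) (fun j => n + (j : ℕ) + 1)) = bases n := by
    unfold bases
    ext B
    simp only [Finset.mem_filter, Finset.mem_powerset]
    constructor
    · rintro ⟨h1, h2⟩
      exact ⟨h1, (isTrans_iff B).1 h2⟩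
    · rintro ⟨h1, h2⟩
      exact ⟨h1, (isTrans_iff B).2 h2⟩
  rw [hS]
  have hsummand : ∀ B ∈ bases n,
      (MvPolynomial.X 0 ^ intAct (2 * n) n (fun j => 2 * ((j : ℕ) + 1))
          (fun j => n + (j : ℕ) + 1) B *
        MvPolynomial.X 1 ^ extAct (2 * n) n (fun j => 2 * ((j : ℕ) + 1))
          (fun j => n + (j : ℕ) + 1) B : MvPolynomial (Fin 2) ℚ)
      = MvPolynomial.X (0 : Fin 2) ^ intA B * MvPolynomial.X (1 : Fin 2) ^ (mn B - 1) := by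
    intro B hB
    have hB' := mem_bases.1 hB
    rw [intAct_eq hB', extAct_eq hB' (by omega)]
  rw [Finset.sum_congr rfl hsummand]
  have hmaps : ∀ B ∈ bases n,
      (fun B => (intA B, mn B - 1)) B ∈ (Finset.Icc 1 n ×ˢ Finset.Icc 1 n) := by
    intro B hB
    have hB' := mem_bases.1 hB
    have h1 := one_le_intA hB' (by omega)
    have h2 := intA_le_n hB'
    have h3 := two_le_mn hB' (by omega)
    have h4 := mn_le_succ_n hB' (by omega)
    simp only [Finset.mem_product, Finset.mem_Icc]
    omega
  rw [← Finset.sum_fiberwise_of_maps_to hmaps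
    (fun B => MvPolynomial.X (0 : Fin 2) ^ intA B * MvPolynomial.X (1 : Fin 2) ^ (mn B - 1))]
  have hinner : ∀ p ∈ (Finset.Icc 1 n ×ˢ Finset.Icc 1 n),
      (∑ B ∈ (bases n).filter (fun B => (intA B, mn B - 1) = p),
          (MvPolynomial.X (0 : Fin 2) ^ intA B * MvPolynomial.X (1 : Fin 2) ^ (mn B - 1) :
            MvPolynomial (Fin 2) ℚ))
        = (fiber n p.1 p.2).card •
            (MvPolynomial.X (0 : Fin 2) ^ p.1 * MvPolynomial.X (1 : Fin 2) ^ p.2 :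
              MvPolynomial (Fin 2) ℚ) := by
    intro p hp
    have hp' := Finset.mem_product.1 hp
    have hp2 : 1 ≤ p.2 := (Finset.mem_Icc.1 hp'.2).1
    have hfib : (bases n).filter (fun B => (intA B, mn B - 1) = p) = fiber n p.1 p.2 := by
      ext B
      simp only [Finset.mem_filter, mem_fiber, mem_bases, Prod.ext_iff]
      constructor
      · rintro ⟨h1, h2, h3⟩
        have := two_le_mn h1 (by omega : 1 ≤ n)
        exact ⟨h1, h2, by omega⟩
      · rintro ⟨h1, h2, h3⟩
        have := two_le_mn h1 (by omega : 1 ≤ n)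
        exact ⟨h1, h2, by omega⟩
    rw [hfib]
    have hterm : ∀ B ∈ fiber n p.1 p.2,
        (MvPolynomial.X (0 : Fin 2) ^ intA B * MvPolynomial.X (1 : Fin 2) ^ (mn B - 1) :
          MvPolynomial (Fin 2) ℚ)
        = MvPolynomial.X (0 : Fin 2) ^ p.1 * MvPolynomial.X (1 : Fin 2) ^ p.2 := by
      intro B hB
      rcases mem_fiber.1 hB with ⟨hb, h1, h2⟩
      rw [h1, h2, Nat.add_sub_cancel]
    rw [Finset.sum_congr rfl hterm, Finset.sum_const]
  rw [Finset.sum_congr rfl hinner]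
  have hsub : (Finset.Icc 1 n ×ˢ Finset.Icc 1 n).filter (fun p => p.1 + p.2 ≤ n + 1)
      ⊆ Finset.Icc 1 n ×ˢ Finset.Icc 1 n := Finset.filter_subset _ _
  have hvanish : ∀ p ∈ Finset.Icc 1 n ×ˢ Finset.Icc 1 n,
      p ∉ (Finset.Icc 1 n ×ˢ Finset.Icc 1 n).filter (fun p => p.1 + p.2 ≤ n + 1) →
      (fiber n p.1 p.2).card •
        (MvPolynomial.X (0 : Fin 2) ^ p.1 * MvPolynomial.X (1 : Fin 2) ^ p.2 :
          MvPolynomial (Fin 2) ℚ) = 0 := by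
    intro p hp hnp
    have hp' := Finset.mem_product.1 hp
    have hp1 := Finset.mem_Icc.1 hp'.1
    have hp2 := Finset.mem_Icc.1 hp'.2
    have hgt : n + 1 < p.1 + p.2 := by
      by_contra hc
      exact hnp (Finset.mem_filter.2 ⟨hp, by omega⟩)
    have hq : ((fiber n p.1 p.2).card : ℚ) = 0 := by
      rw [fiber_card_eq n hn2 p.1 p.2 hp1.1 hp2.1 hp2.2, Fq_of_gt hgt]
    have hz : (fiber n p.1 p.2).card = 0 := by exact_mod_cast hq
    rw [hz, zero_smul]
  rw [← Finset.sum_subset hsub hvanish]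
  apply Finset.sum_congr rfl
  intro p hp
  rcases Finset.mem_filter.1 hp with ⟨hp0, hple⟩
  have hp' := Finset.mem_product.1 hp0
  have hp1 := Finset.mem_Icc.1 hp'.1
  have hp2 := Finset.mem_Icc.1 hp'.2
  have hcard : ((fiber n p.1 p.2).card : ℚ) = Fq n (p.1 + p.2) :=
    fiber_card_eq n hn2 p.1 p.2 hp1.1 hp2.1 hp2.2
  rw [Fq_eq_coef hn2 (by omega) (by omega)] at hcard
  rw [nsmul_eq_mul, ← MvPolynomial.C_eq_coe_nat, hcard, mul_assoc]
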